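/- Let T < 0 be a real number and let n ≥ 62 be an integer. Define c_q = ∫_0^∞ (1+(t−T)²)^{(5+2q−n)/2} dt for q = 0, 1, 2. Then 9 c₁² − 8 · ((n+7)(n−7)/((n+3)(n−9))) · c₀ c₂ > 0. -/

import Mathlib

open MeasureTheory Set Filter



private lemma base_pos (T t : ℝ) : 0 < 1 + (t - T) ^ 2 := by positivity

private lemma aux_cont (T β : ℝ) : Continuous fun t : ℝ => (1 + (t - T) ^ 2) ^ (-β) := by
  apply Continuous.rpow_const (by continuity)
  intro t; exact Or.inl (ne_of_gt (base_pos T t))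

private lemma aux_integrable (T β : ℝ) (hβ : 1 ≤ β) :
    IntegrableOn (fun t : ℝ => (1 + (t - T) ^ 2) ^ (-β)) (Set.Ioi 0) := by
  have h1 : Integrable fun t : ℝ => (1 + (t - T) ^ 2)⁻¹ := by
    have := integrable_inv_one_add_sq.comp_sub_right T
    simpa using this
  refine (h1.mono' ((aux_cont T β).aestronglyMeasurable) ?_).integrableOn
  filter_upwards with t
  have hb := base_pos T t
  rw [Real.norm_eq_abs, abs_of_nonneg (Real.rpow_nonneg (le_of_lt hb) _)]
  calc (1 + (t - T) ^ 2) ^ (-β) ≤ (1 + (t - T) ^ 2) ^ (-1 : ℝ) :=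
        Real.rpow_le_rpow_of_exponent_le (by nlinarith [sq_nonneg (t - T)]) (by linarith)
    _ = (1 + (t - T) ^ 2)⁻¹ := Real.rpow_neg_one _

private lemma aux_pos (T β : ℝ) (hβ : 1 ≤ β) :
    0 < ∫ t in Set.Ioi (0:ℝ), (1 + (t - T) ^ 2) ^ (-β) := by
  rw [setIntegral_pos_iff_support_of_nonneg_ae ?_ (aux_integrable T β hβ)]
  · have hs : (Function.support fun t : ℝ => (1 + (t - T) ^ 2) ^ (-β)) = Set.univ := by
      ext t
      simp only [Function.mem_support, Set.mem_univ, iff_true]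
      exact ne_of_gt (Real.rpow_pos_of_pos (base_pos T t) _)
    rw [hs, Set.univ_inter, Real.volume_Ioi]
    exact ENNReal.zero_lt_top
  · filter_upwards with t
    exact Real.rpow_nonneg (le_of_lt (base_pos T t)) _





private lemma aux_identity (T β : ℝ) (hβ : 1 ≤ β) :
    (2 * β - 1) * (∫ t in Set.Ioi (0:ℝ), (1 + (t - T) ^ 2) ^ (-β))
      = 2 * β * (∫ t in Set.Ioi (0:ℝ), (1 + (t - T) ^ 2) ^ (-(β + 1)))
        + (-T) * (1 + T ^ 2) ^ (-β) := by
  set F : ℝ → ℝ := fun t => (t - T) * (1 + (t - T) ^ 2) ^ (-β) with hF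
  set f' : ℝ → ℝ := fun t => (1 - 2 * β) * (1 + (t - T) ^ 2) ^ (-β)
    + 2 * β * (1 + (t - T) ^ 2) ^ (-(β + 1)) with hf'
  have hderiv : ∀ t ∈ Set.Ici (0:ℝ), HasDerivAt F (f' t) t := by
    intro t _
    have hb := base_pos T t
    have h1 : HasDerivAt (fun t : ℝ => 1 + (t - T) ^ 2) (2 * (t - T)) t := by
      have h0 : HasDerivAt (fun t : ℝ => t - T) 1 t := (hasDerivAt_id t).sub_const T
      have := (h0.pow 2).const_add 1
      simpa using this
    have h2 : HasDerivAt (fun t : ℝ => (1 + (t - T) ^ 2) ^ (-β))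
        (2 * (t - T) * (-β) * (1 + (t - T) ^ 2) ^ (-β - 1)) t :=
      h1.rpow_const (Or.inl (ne_of_gt hb))
    have h3 := ((hasDerivAt_id t).sub_const T).mul h2
    refine HasDerivAt.congr_deriv h3 ?_
    have e1 : (1 + (t - T) ^ 2) ^ (-β) = (1 + (t - T) ^ 2) * (1 + (t - T) ^ 2) ^ (-β - 1) := by
      have h4 := Real.rpow_add hb 1 (-β - 1)
      rw [show (1 : ℝ) + (-β - 1) = -β by ring] at h4
      rw [h4, Real.rpow_one]
    have e2 : (1 + (t - T) ^ 2) ^ (-(β + 1)) = (1 + (t - T) ^ 2) ^ (-β - 1) := by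
      congr 1
      ring
    rw [hf']
    simp only [e2, id_eq]
    rw [e1]
    ring
  have htend : Tendsto F atTop (nhds 0) := by
    have hlim : Tendsto (fun t : ℝ => (t - T) ^ (-(2 * β - 1))) atTop (nhds 0) := by
      have h0 : Tendsto (fun x : ℝ => x ^ (-(2 * β - 1))) atTop (nhds 0) :=
        tendsto_rpow_neg_atTop (by linarith)
      have h1 : Tendsto (fun t : ℝ => t - T) atTop atTop := by
        simpa [sub_eq_add_neg] using tendsto_atTop_add_const_right atTop (-T) (tendsto_id (α := ℝ))
      exact h0.comp h1
    apply squeeze_zero' ?_ ?_ hlim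
    · filter_upwards [eventually_ge_atTop (T + 1)] with t ht
      exact mul_nonneg (by linarith) (Real.rpow_nonneg (le_of_lt (base_pos T t)) _)
    · filter_upwards [eventually_ge_atTop (T + 1)] with t ht
      have hx1 : (1:ℝ) ≤ t - T := by linarith
      have hx0 : (0:ℝ) < t - T := by linarith
      have hb := base_pos T t
      have key : (1 + (t - T) ^ 2) ^ (-β) ≤ ((t - T) ^ 2) ^ (-β) := by
        rw [Real.rpow_neg (le_of_lt hb), Real.rpow_neg (by positivity)]
        apply inv_anti₀ (Real.rpow_pos_of_pos (by positivity) _)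
        apply Real.rpow_le_rpow (by positivity) (by linarith) (by linarith)
      have e3 : ((t - T) ^ 2) ^ (-β) = (t - T) ^ (-(2*β)) := by
        rw [← Real.rpow_natCast (t - T) 2, ← Real.rpow_mul (le_of_lt hx0)]
        norm_num
      calc F t ≤ (t - T) * ((t - T) ^ 2) ^ (-β) :=
            mul_le_mul_of_nonneg_left key (by linarith)
        _ = (t - T) ^ (-(2 * β - 1)) := by
            rw [e3, ← Real.rpow_one_add' (le_of_lt hx0) (by nlinarith : (1:ℝ) + -(2*β) ≠ 0)]
            congr 1
            ring
  have hint : IntegrableOn f' (Set.Ioi (0:ℝ)) := by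
    apply Integrable.add
    · exact ((aux_integrable T β hβ).const_mul _)
    · exact ((aux_integrable T (β + 1) (by linarith)).const_mul _)
  have hkey := integral_Ioi_of_hasDerivAt_of_tendsto' hderiv hint htend
  have hsplit : ∫ t in Set.Ioi (0:ℝ), f' t
      = (1 - 2 * β) * (∫ t in Set.Ioi (0:ℝ), (1 + (t - T) ^ 2) ^ (-β))
        + 2 * β * (∫ t in Set.Ioi (0:ℝ), (1 + (t - T) ^ 2) ^ (-(β + 1))) := by
    rw [hf']
    rw [integral_add (((aux_integrable T β hβ).const_mul _))
      (((aux_integrable T (β + 1) (by linarith)).const_mul _))]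
    rw [integral_const_mul, integral_const_mul]
  have hF0 : F 0 = (-T) * (1 + T ^ 2) ^ (-β) := by
    rw [hF]
    norm_num
  rw [hsplit, hF0] at hkey
  linarith [hkey]





private lemma aux_step (T β : ℝ) (hT : T < 0) (hβ : 1 ≤ β) :
    (∫ t in Set.Ioi (0:ℝ), (1 + (t - T) ^ 2) ^ (-(β + 1)))
      ≤ (1 + T ^ 2)⁻¹ * ∫ t in Set.Ioi (0:ℝ), (1 + (t - T) ^ 2) ^ (-β) := by
  have hT2 : (0:ℝ) < 1 + T ^ 2 := by positivity
  rw [← integral_const_mul]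
  apply setIntegral_mono_on (aux_integrable T (β + 1) (by linarith))
    (((aux_integrable T β hβ).const_mul _)) measurableSet_Ioi
  intro t ht
  have ht0 : (0:ℝ) < t := ht
  have hb := base_pos T t
  have hsq : T ^ 2 < (t - T) ^ 2 := by nlinarith
  have hdecomp : (1 + (t - T) ^ 2) ^ (-(β + 1))
      = (1 + (t - T) ^ 2)⁻¹ * (1 + (t - T) ^ 2) ^ (-β) := by
    rw [show -(β + 1) = (-1) + -β by ring, Real.rpow_add hb, Real.rpow_neg_one]
  rw [hdecomp]
  apply mul_le_mul_of_nonneg_right _ (Real.rpow_nonneg (le_of_lt hb) _)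
  apply inv_anti₀ hT2
  nlinarith


set_option maxHeartbeats 1000000 in
private lemma key_algebra (N u b x0 x1 x2 x3 : ℝ) (hN : 62 ≤ N)
    (hu0 : 0 < u) (hu1 : u < 1) (hb0 : 0 < b)
    (hx0 : 0 < x0) (hx1 : 0 < x1) (hx2 : 0 < x2) (hx3 : 0 ≤ x3)
    (hE2 : (N - 10) * x2 = (N - 9) * x1 + b)
    (hE1 : (N - 8) * x1 = (N - 7) * x0 + u * b)
    (hE0 : (N - 6) * x0 = (N - 5) * x3 + u * (u * b))
    (hS0 : x3 ≤ u * x0) :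
    8 * (N + 7) * (N - 7) * (x0 * x2) < 9 * x1 ^ 2 * ((N + 3) * (N - 9)) := by
  have h62 : (0:ℝ) ≤ N - 62 := by linarith
  -- step 1: the key quadratic inequality KEY2
  have KEY2 : 8 * (N + 7) * (N - 7) * x0 * (((N - 9) * u + (N - 8)) * x1 - (N - 7) * x0)
      < 9 * (N + 3) * (N - 9) * (N - 10) * (u * x1 ^ 2) := by
    rcases le_or_gt u (77/100) with hcase | hcase
    · -- small u regime: use the sharp Mills-type bound
      have hM0 : (N - 6) * x0 ≤ (N - 5) * (u * x0) + u * (u * b) := by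
        have := mul_le_mul_of_nonneg_left hS0 (show (0:ℝ) ≤ N - 5 by linarith)
        linarith [hE0]
      have hub : u * (u * b) + u * ((N - 7) * x0) = u * ((N - 8) * x1) := by
        linear_combination (-u) * hE1
      have hy : (N - 6) * x0 - 2 * (u * x0) ≤ (N - 8) * (u * x1) := by
        linarith [hM0, hub]
      have hv : (0:ℝ) ≤ 77/100 - u := by linarith
      have hH : 2 * (N - 7) * (N - 8) * u
          ≤ ((N - 9) * u + (N - 8)) * ((N - 6) - 2 * u) := by
        linarith [mul_nonneg (mul_nonneg hv hu0.le) h62,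
          mul_nonneg hv hu0.le,
          mul_nonneg (mul_nonneg h62 hv) hu0.le,
          mul_nonneg h62 hv,
          mul_nonneg (mul_nonneg h62 h62) hv,
          mul_nonneg h62 h62, h62]
      -- monotonicity certificate
      have t1 : (0:ℝ) ≤ (N - 8) * (u * x1) - ((N - 6) - 2 * u) * x0 := by linarith
      have hfac : (0:ℝ) ≤ ((N - 6) - 2 * u) * ((N - 9) * u + (N - 8)) * x1
          - (N - 7) * (((N - 6) - 2 * u) * x0 + (N - 8) * (u * x1)) := by
        have h1 : 2 * (N - 7) * (N - 8) * u * x1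
            ≤ ((N - 9) * u + (N - 8)) * ((N - 6) - 2 * u) * x1 :=
          mul_le_mul_of_nonneg_right hH hx1.le
        have h2 : (N - 7) * (((N - 6) - 2 * u) * x0)
            ≤ (N - 7) * ((N - 8) * (u * x1)) :=
          mul_le_mul_of_nonneg_left (by linarith) (by linarith)
        linarith [h1, h2]
      have tA : (0:ℝ) ≤ ((N - 8) * (u * x1) - ((N - 6) - 2 * u) * x0)
          * (((N - 6) - 2 * u) * ((N - 9) * u + (N - 8)) * x1
              - (N - 7) * (((N - 6) - 2 * u) * x0 + (N - 8) * (u * x1)))  :=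
        mul_nonneg t1 hfac
      have tA' : (0:ℝ) ≤ (8 * (N + 7) * (N - 7)) *
          (((N - 8) * (u * x1) - ((N - 6) - 2 * u) * x0)
          * (((N - 6) - 2 * u) * ((N - 9) * u + (N - 8)) * x1
              - (N - 7) * (((N - 6) - 2 * u) * x0 + (N - 8) * (u * x1)))) :=
        mul_nonneg (by nlinarith) tA
      -- the G2 polynomial bound via SOS
      have hA : (0:ℝ) < 36*(N+3)*(N-9)*(N-10) + 16*(N+7)*(N-7)*(N-8)*(N-9) := by
        linarith [h62, mul_nonneg h62 h62, mul_nonneg (mul_nonneg h62 h62) h62,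
          mul_nonneg (mul_nonneg (mul_nonneg h62 h62) h62) h62]
      have hPP : (0:ℝ) <
          4 * (36*(N+3)*(N-9)*(N-10) + 16*(N+7)*(N-7)*(N-8)*(N-9))
            * (9*(N+3)*(N-9)*(N-10)*(N-6)^2 - 8*(N+7)*(N-7)*(N-8)^2*(N-6))
          - (-36*(N-6)*(N+3)*(N-9)*(N-10) + 16*(N+7)*(N-7)^2*(N-8))^2 := by
        linarith [h62, mul_nonneg h62 h62,
          pow_nonneg h62 3, pow_nonneg h62 4, pow_nonneg h62 5,
          pow_nonneg h62 6, pow_nonneg h62 7, pow_nonneg h62 8, pow_nonneg h62 9]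
      have hprod : (0:ℝ) <
          (4 * (36*(N+3)*(N-9)*(N-10) + 16*(N+7)*(N-7)*(N-8)*(N-9)))
          * (9*(N+3)*(N-9)*(N-10)*((N-6)-2*u)^2
            - 8*(N+7)*(N-7)*(N-8)*(((N-6)-2*u)*((N-9)*u+(N-8)) - (N-7)*(N-8)*u)) := by
        linarith [hPP,
          sq_nonneg (2*(36*(N+3)*(N-9)*(N-10) + 16*(N+7)*(N-7)*(N-8)*(N-9))*u
            + (-36*(N-6)*(N+3)*(N-9)*(N-10) + 16*(N+7)*(N-7)^2*(N-8)))]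
      have hG2 : (0:ℝ) < 9*(N+3)*(N-9)*(N-10)*((N-6)-2*u)^2
          - 8*(N+7)*(N-7)*(N-8)*(((N-6)-2*u)*((N-9)*u+(N-8)) - (N-7)*(N-8)*u) := by
        by_contra hcon
        push_neg at hcon
        have h4A : (0:ℝ) ≤ 4 * (36*(N+3)*(N-9)*(N-10) + 16*(N+7)*(N-7)*(N-8)*(N-9)) := by
          linarith [hA]
        have := mul_nonneg h4A (neg_nonneg.2 hcon)
        linarith [hprod, this]
      have hG2' : (0:ℝ) < (9*(N+3)*(N-9)*(N-10)*((N-6)-2*u)^2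
          - 8*(N+7)*(N-7)*(N-8)*(((N-6)-2*u)*((N-9)*u+(N-8)) - (N-7)*(N-8)*u))
            * (u * x1^2) :=
        mul_pos hG2 (mul_pos hu0 (pow_pos hx1 2))
      -- combine: D^2 * (RHS - LHS) = 8(N+7)(N-7) * tA + hG2'
      have hbig : (0:ℝ) < ((N-6)-2*u)^2 * (9 * (N + 3) * (N - 9) * (N - 10) * (u * x1 ^ 2))
          - ((N-6)-2*u)^2 * (8 * (N + 7) * (N - 7) * x0
              * (((N - 9) * u + (N - 8)) * x1 - (N - 7) * x0)) := by
        linarith [tA', hG2']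
      by_contra hcon
      push_neg at hcon
      have hD2 : (0:ℝ) ≤ ((N-6)-2*u)^2 := sq_nonneg _
      linarith [mul_nonneg hD2 (sub_nonneg.2 hcon), hbig]
    · -- large u regime: unconstrained quadratic maximum
      have hvv : (0:ℝ) ≤ u - 77/100 := by linarith
      have hP1 : (0:ℝ) < 69300*(N+3)*((N-9)*(N-10)) - 2*(N+7)*(177*N - 1493)^2 := by
        linarith [h62, mul_nonneg h62 h62, mul_nonneg (mul_nonneg h62 h62) h62]
      have hP2 : (0:ℝ) < 9*(N+3)*((N-9)*(N-10)) - 2*(N+7)*(2*N-17)^2 := by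
        linarith [h62, mul_nonneg h62 h62, mul_nonneg (mul_nonneg h62 h62) h62]
      have hG1 : (0:ℝ) < 9*(N+3)*(N-9)*(N-10)*u - 2*(N+7)*((N-9)*u + (N-8))^2 := by
        linarith [mul_pos (show (0:ℝ) < 1 - u by linarith) hP1,
          mul_nonneg hvv hP2.le,
          mul_nonneg (mul_nonneg hvv (show (0:ℝ) ≤ 1 - u by linarith))
            (mul_nonneg (show (0:ℝ) ≤ N + 7 by linarith) (sq_nonneg (N - 9)))]
      linarith [mul_pos hG1 (pow_pos hx1 2),
        mul_nonneg (show (0:ℝ) ≤ 2*(N+7) by linarith)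
          (sq_nonneg (((N-9)*u + (N-8))*x1 - 2*(N-7)*x0))]
  -- step 2: deduce the goal from KEY2
  have h10 : (0:ℝ) < u * (N - 10) := mul_pos hu0 (by linarith)
  have hexp : (u * (N - 10)) * (8 * (N + 7) * (N - 7) * (x0 * x2))
      = 8 * (N + 7) * (N - 7) * x0 * (((N - 9) * u + (N - 8)) * x1 - (N - 7) * x0) := by
    linear_combination (8*(N+7)*(N-7)*x0*u) * hE2 - (8*(N+7)*(N-7)*x0) * hE1
  have h2 : (u * (N - 10)) * (8 * (N + 7) * (N - 7) * (x0 * x2))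
      < (u * (N - 10)) * (9 * x1 ^ 2 * ((N + 3) * (N - 9))) := by
    rw [hexp]
    linarith [KEY2]
  exact lt_of_mul_lt_mul_left h2 h10.le



set_option maxHeartbeats 1000000 in
/-- For `T < 0` and `n ≥ 62`, with
`c_q = ∫_0^∞ (1+(t−T)²)^{(5+2q−n)/2} dt` (`q = 0,1,2`), the discriminant quantity
`9c₁² − 8((n+7)(n−7)/((n+3)(n−9))) c₀c₂` is positive. -/
theorem discriminant_positive (T : ℝ) (hT : T < 0) (n : ℕ) (hn : 62 ≤ n)
    (c : ℕ → ℝ)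
    (hc : ∀ m : ℕ, c m
      = ∫ t in Set.Ioi (0 : ℝ), (1 + (t - T) ^ 2) ^ ((5 + 2 * (m : ℝ) - (n : ℝ)) / 2)) :
    0 < 9 * c 1 ^ 2
      - 8 * (((n : ℝ) + 7) * ((n : ℝ) - 7) / (((n : ℝ) + 3) * ((n : ℝ) - 9))) * (c 0 * c 2) := by
  have hT2 : (0:ℝ) < 1 + T ^ 2 := by positivity
  set N : ℝ := (n : ℝ) with hNdef
  have hN : (62:ℝ) ≤ N := by rw [hNdef]; exact_mod_cast hn
  set β : ℝ := (N - 9) / 2 with hβdef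
  have hβ1 : (1:ℝ) ≤ β := by rw [hβdef]; linarith
  have h2β : 2 * β = N - 9 := by rw [hβdef]; ring
  -- rewrite a c value into normalized rpow form
  have hc2 : c 2 = ∫ t in Set.Ioi (0:ℝ), (1 + (t - T) ^ 2) ^ (-β) := by
    rw [hc 2]; congr 1; funext t; congr 1; push_cast; rw [hβdef]; ring
  have hc1 : c 1 = ∫ t in Set.Ioi (0:ℝ), (1 + (t - T) ^ 2) ^ (-(β + 1)) := by
    rw [hc 1]; congr 1; funext t; congr 1; push_cast; rw [hβdef]; ring
  have hc0 : c 0 = ∫ t in Set.Ioi (0:ℝ), (1 + (t - T) ^ 2) ^ (-(β + 2)) := by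
    rw [hc 0]; congr 1; funext t; congr 1; push_cast; rw [hβdef]; ring
  -- raw identities
  have F2 := aux_identity T β hβ1
  have F1 := aux_identity T (β + 1) (by linarith)
  have F0 := aux_identity T (β + 2) (by linarith)
  have S0raw := aux_step T (β + 2) hT (by linarith)
  -- normalize exponents β+1+1 → β+2
  have enorm : β + 1 + 1 = β + 2 := by ring
  simp only [enorm] at F1
  -- positivity facts
  have hx2 : 0 < ∫ t in Set.Ioi (0:ℝ), (1 + (t - T) ^ 2) ^ (-β) := aux_pos T β hβ1
  have hx1 : 0 < ∫ t in Set.Ioi (0:ℝ), (1 + (t - T) ^ 2) ^ (-(β + 1)) :=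
    aux_pos T (β + 1) (by linarith)
  have hx0 : 0 < ∫ t in Set.Ioi (0:ℝ), (1 + (t - T) ^ 2) ^ (-(β + 2)) :=
    aux_pos T (β + 2) (by linarith)
  -- name the integrals
  set x2 : ℝ := ∫ t in Set.Ioi (0:ℝ), (1 + (t - T) ^ 2) ^ (-β) with hx2def
  set x1 : ℝ := ∫ t in Set.Ioi (0:ℝ), (1 + (t - T) ^ 2) ^ (-(β + 1)) with hx1def
  set x0 : ℝ := ∫ t in Set.Ioi (0:ℝ), (1 + (t - T) ^ 2) ^ (-(β + 2)) with hx0def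
  set x3 : ℝ := ∫ t in Set.Ioi (0:ℝ), (1 + (t - T) ^ 2) ^ (-(β + 2 + 1)) with hx3def
  set u : ℝ := (1 + T ^ 2)⁻¹ with hudef
  set b : ℝ := (-T) * (1 + T ^ 2) ^ (-β) with hbdef
  -- boundary rpow decompositions
  have hB1 : (1 + T ^ 2) ^ (-(β + 1)) = u * (1 + T ^ 2) ^ (-β) := by
    rw [hudef, show -(β + 1) = (-1) + -β by ring, Real.rpow_add hT2, Real.rpow_neg_one]
  have hB2 : (1 + T ^ 2) ^ (-(β + 2)) = u * (u * (1 + T ^ 2) ^ (-β)) := by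
    rw [hudef, show -(β + 2) = (-1) + ((-1) + -β) by ring, Real.rpow_add hT2,
      Real.rpow_add hT2, Real.rpow_neg_one]
  -- basic facts about u and b
  have hu0 : 0 < u := by rw [hudef]; positivity
  have huT : u * (1 + T ^ 2) = 1 := by rw [hudef]; field_simp
  have hTsq : 0 < T ^ 2 := by nlinarith
  have hu1 : u < 1 := by nlinarith [huT]
  have hb0 : 0 < b := by
    rw [hbdef]
    exact mul_pos (by linarith) (Real.rpow_pos_of_pos hT2 _)
  -- clean identities
  have hE2 : (N - 10) * x2 = (N - 9) * x1 + b := by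
    linear_combination F2 - (x2 - x1) * h2β
  have hE1 : (N - 8) * x1 = (N - 7) * x0 + u * b := by
    linear_combination F1 + (x0 - x1) * h2β + (-T) * hB1 - u * hbdef
  have hE0 : (N - 6) * x0 = (N - 5) * x3 + u * (u * b) := by
    linear_combination F0 + (x3 - x0) * h2β + (-T) * hB2 - (u * u) * hbdef
  have hS0 : x3 ≤ u * x0 := S0raw
  have hx3 : 0 < x3 := aux_pos T (β + 2 + 1) (by linarith)
  clear_value x2 x1 x0 x3 u b β N
  -- goal in terms of x's
  rw [hc0, hc1, hc2]
  have hden : (0:ℝ) < (N + 3) * (N - 9) := by nlinarith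
  -- the key inequality
  have KEY : 8 * (N + 7) * (N - 7) * (x0 * x2) < 9 * x1 ^ 2 * ((N + 3) * (N - 9)) :=
    key_algebra N u b x0 x1 x2 x3 hN hu0 hu1 hb0 hx0 hx1 hx2 hx3.le hE2 hE1 hE0 hS0
  have hKlt : 8 * ((N + 7) * (N - 7) / ((N + 3) * (N - 9))) * (x0 * x2) < 9 * x1 ^ 2 := by
    rw [mul_comm (8:ℝ) _, mul_assoc, div_mul_eq_mul_div, div_lt_iff₀ hden]
    linear_combination KEY
  linarith
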